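/- (Approximate lower Hermite–Hadamard inequality for (ω₀,ω₁)-convexity.) Assume (A1)–(A4) as above. Let f : I → ℝ be a locally upper bounded Borel measurable function satisfying f(u) ≤ (Ω(u,y)/Ω(x,y))f(x) + (Ω(x,u)/Ω(x,y))f(y) + ε_{x,y}(u) for all x < y in I and u ∈ [x,y], where for fixed x < u < y, (v,w) ↦ ε_{v,w}(u) is bounded and Borel measurable on [x,u] × [u,y]. Then for all x < y in I, f(M₀(x,y)) ≤ ∫_T Λ(t,x,y) f(M(t,x,y)) dμ(t) + E(x,y), where E(x,y) := [∬_{T'×T''} Λ(t')Λ(t'')Ω(M(t'),M(t'')) ε_{M(t'),M(t'')}(M₀(x,y)) dμ dμ] / [∬_{T'×T''} Λ(t')Λ(t'')Ω(M(t'),M(t'')) dμ dμ], with T' = T'_{x,y}, T'' = T''_{x,y}, Λ(t) = Λ(t,x,y), M(t) = M(t,x,y). -/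

import Mathlib

open MeasureTheory

/-- Theorem 3: approximate lower Hermite–Hadamard inequality for
approximate `(ω₀,ω₁)`-convexity: under (A1)–(A4), a locally upper bounded Borel
measurable approximate `(ω₀,ω₁)`-convex function `f` satisfies
`f(M₀(x,y)) ≤ ∫_T Λ(t,x,y) f(M(t,x,y)) dμ(t) + E(x,y)`. -/
theorem approx_lower_hermite_hadamard
    (a b : ℝ) (hab : a < b)
    (ω₀ ω₁ : ℝ → ℝ)
    (hc₀ : ContinuousOn ω₀ (Set.Ioo a b)) (hc₁ : ContinuousOn ω₁ (Set.Ioo a b))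
    (hω₀pos : ∀ z ∈ Set.Ioo a b, 0 < ω₀ z)
    (hcheb : ∀ u ∈ Set.Ioo a b, ∀ v ∈ Set.Ioo a b, u < v →
        0 < ω₀ u * ω₁ v - ω₀ v * ω₁ u)
    {T : Type*} [MeasurableSpace T] (μ : Measure T)
    (Λ M : T → ℝ → ℝ → ℝ) (M₀ : ℝ → ℝ → ℝ)
    (hΛnn : ∀ t x y, 0 ≤ Λ t x y)
    (hΛint : ∀ x ∈ Set.Ioo a b, ∀ y ∈ Set.Ioo a b, x < y →
        Integrable (fun t => Λ t x y) μ)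
    (hMmeas : ∀ x y, Measurable (fun t => M t x y))
    (hMmean : ∀ t, ∀ x ∈ Set.Ioo a b, ∀ y ∈ Set.Ioo a b, x < y →
        M t x y ∈ Set.Icc x y)
    (hM₀strict : ∀ x ∈ Set.Ioo a b, ∀ y ∈ Set.Ioo a b, x < y →
        M₀ x y ∈ Set.Ioo x y)
    (hposmeas : ∀ x ∈ Set.Ioo a b, ∀ y ∈ Set.Ioo a b, x < y →
        0 < μ {t | 0 < Λ t x y ∧ M t x y ≠ M₀ x y})
    (hint₀ : ∀ x ∈ Set.Ioo a b, ∀ y ∈ Set.Ioo a b, x < y →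
        Integrable (fun t => Λ t x y * ω₀ (M t x y)) μ)
    (hint₁ : ∀ x ∈ Set.Ioo a b, ∀ y ∈ Set.Ioo a b, x < y →
        Integrable (fun t => Λ t x y * ω₁ (M t x y)) μ)
    (hrep₀ : ∀ x ∈ Set.Ioo a b, ∀ y ∈ Set.Ioo a b, x < y →
        ω₀ (M₀ x y) = ∫ t, Λ t x y * ω₀ (M t x y) ∂μ)
    (hrep₁ : ∀ x ∈ Set.Ioo a b, ∀ y ∈ Set.Ioo a b, x < y →
        ω₁ (M₀ x y) = ∫ t, Λ t x y * ω₁ (M t x y) ∂μ)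
    -- f : locally upper bounded, Borel measurable, hemi-integrable along the means
    (f : ℝ → ℝ) (hfmeas : Measurable f)
    (hfbdd : ∀ x ∈ Set.Ioo a b, ∀ y ∈ Set.Ioo a b, x < y →
        BddAbove (f '' Set.Icc x y))
    (hfint : ∀ x ∈ Set.Ioo a b, ∀ y ∈ Set.Ioo a b, x < y →
        Integrable (fun t => Λ t x y * f (M t x y)) μ)
    -- the error function and its regularity
    (eps : ℝ → ℝ → ℝ → ℝ)
    (hepsreg : ∀ x ∈ Set.Ioo a b, ∀ y ∈ Set.Ioo a b, ∀ u, x < u → u < y →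
        (∃ C, ∀ v ∈ Set.Icc x u, ∀ w ∈ Set.Icc u y, |eps v w u| ≤ C) ∧
        Measurable (fun vw : ℝ × ℝ => eps vw.1 vw.2 u))
    -- approximate (ω₀,ω₁)-convexity
    (hconv : ∀ x ∈ Set.Ioo a b, ∀ y ∈ Set.Ioo a b, x < y → ∀ u ∈ Set.Icc x y,
        f u ≤ (ω₀ u * ω₁ y - ω₀ y * ω₁ u) / (ω₀ x * ω₁ y - ω₀ y * ω₁ x) * f x +
          (ω₀ x * ω₁ u - ω₀ u * ω₁ x) / (ω₀ x * ω₁ y - ω₀ y * ω₁ x) * f y +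
          eps x y u) :
    ∀ x ∈ Set.Ioo a b, ∀ y ∈ Set.Ioo a b, x < y →
      f (M₀ x y) ≤ (∫ t, Λ t x y * f (M t x y) ∂μ) +
        (∫ t' in {t | 0 < Λ t x y ∧ M t x y < M₀ x y},
            ∫ t'' in {t | 0 < Λ t x y ∧ M₀ x y ≤ M t x y},
              Λ t' x y * Λ t'' x y *
                (ω₀ (M t' x y) * ω₁ (M t'' x y) - ω₀ (M t'' x y) * ω₁ (M t' x y)) *
                eps (M t' x y) (M t'' x y) (M₀ x y) ∂μ ∂μ) /
        (∫ t' in {t | 0 < Λ t x y ∧ M t x y < M₀ x y},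
            ∫ t'' in {t | 0 < Λ t x y ∧ M₀ x y ≤ M t x y},
              Λ t' x y * Λ t'' x y *
                (ω₀ (M t' x y) * ω₁ (M t'' x y) - ω₀ (M t'' x y) * ω₁ (M t' x y)) ∂μ ∂μ) := by
  intro x hx y hy hxy
  have hIcc : Set.Icc x y ⊆ Set.Ioo a b := fun z hz =>
    ⟨lt_of_lt_of_le hx.1 hz.1, lt_of_le_of_lt hz.2 hy.2⟩
  have hc := hM₀strict x hx y hy hxy
  set c : ℝ := M₀ x y with hcdef
  have hcmem : c ∈ Set.Icc x y := ⟨hc.1.le, hc.2.le⟩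
  have hmem : ∀ t, M t x y ∈ Set.Icc x y := fun t => hMmean t x hx y hy hxy
  -- measurable nonneg version of Λ
  have hLint0 : Integrable (fun t => Λ t x y) μ := hΛint x hx y hy hxy
  obtain ⟨g, hgsm, hgae⟩ := hLint0.aestronglyMeasurable
  set L : T → ℝ := fun t => max (g t) 0 with hLdef
  have hLmeas : Measurable L := (hgsm.measurable).max measurable_const
  have hLnn : ∀ t, 0 ≤ L t := fun t => le_max_right _ _
  have hae : (fun t => Λ t x y) =ᵐ[μ] L := hgae.mono (fun t ht => by
    simp only [hLdef, ← ht]; exact (max_eq_left (hΛnn t x y)).symm)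
  have hmeas_m : Measurable (fun t => M t x y) := hMmeas x y
  have hcomp : ∀ (h : ℝ → ℝ), ContinuousOn h (Set.Ioo a b) →
      Measurable (fun t => h (M t x y)) := by
    intro h hh
    have h1 : Continuous ((Set.Ioo a b).restrict h) :=
      continuousOn_iff_continuous_restrict.mp hh
    have h2 : Measurable (fun t => (⟨M t x y, hIcc (hmem t)⟩ : Set.Ioo a b)) :=
      hmeas_m.subtype_mk
    exact h1.measurable.comp h2
  have hmω₀ : Measurable fun t => ω₀ (M t x y) := hcomp ω₀ hc₀
  have hmω₁ : Measurable fun t => ω₁ (M t x y) := hcomp ω₁ hc₁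
  have hmf : Measurable fun t => f (M t x y) := hfmeas.comp hmeas_m
  have hLint : Integrable L μ := hLint0.congr hae
  have hcongr : ∀ (h : T → ℝ), (fun t => Λ t x y * h t) =ᵐ[μ] (fun t => L t * h t) :=
    fun h => hae.mono fun t ht => by show Λ t x y * h t = L t * h t; rw [show Λ t x y = L t from ht]
  have hint₀' : Integrable (fun t => L t * ω₀ (M t x y)) μ :=
    (hint₀ x hx y hy hxy).congr (hcongr _)
  have hint₁' : Integrable (fun t => L t * ω₁ (M t x y)) μ :=
    (hint₁ x hx y hy hxy).congr (hcongr _)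
  have hintf' : Integrable (fun t => L t * f (M t x y)) μ :=
    (hfint x hx y hy hxy).congr (hcongr _)
  have hrep₀' : ω₀ c = ∫ t, L t * ω₀ (M t x y) ∂μ := by
    rw [hcdef, hrep₀ x hx y hy hxy]; exact integral_congr_ae (hcongr _)
  have hrep₁' : ω₁ c = ∫ t, L t * ω₁ (M t x y) ∂μ := by
    rw [hcdef, hrep₁ x hx y hy hxy]; exact integral_congr_ae (hcongr _)
  -- the two half-sets
  set S' : Set T := {t | 0 < L t ∧ M t x y < c} with hS'def
  set S'' : Set T := {t | 0 < L t ∧ c ≤ M t x y} with hS''def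
  have hS'meas : MeasurableSet S' := by
    rw [hS'def, Set.setOf_and]
    exact (measurableSet_lt measurable_const hLmeas).inter
      (measurableSet_lt hmeas_m measurable_const)
  have hS''meas : MeasurableSet S'' := by
    rw [hS''def, Set.setOf_and]
    exact (measurableSet_lt measurable_const hLmeas).inter
      (measurableSet_le measurable_const hmeas_m)
  have haeset' : ({t | 0 < Λ t x y ∧ M t x y < c} : Set T) =ᵐ[μ] S' := by
    rw [Filter.eventuallyEq_set]
    filter_upwards [hae] with t ht
    simp only [Set.mem_setOf_eq, hS'def, ht]
  have haeset'' : ({t | 0 < Λ t x y ∧ c ≤ M t x y} : Set T) =ᵐ[μ] S'' := by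
    rw [Filter.eventuallyEq_set]
    filter_upwards [hae] with t ht
    simp only [Set.mem_setOf_eq, hS''def, ht]
  have hres' : μ.restrict {t | 0 < Λ t x y ∧ M t x y < c} = μ.restrict S' :=
    Measure.restrict_congr_set haeset'
  have hres'' : μ.restrict {t | 0 < Λ t x y ∧ c ≤ M t x y} = μ.restrict S'' :=
    Measure.restrict_congr_set haeset''
  -- abbreviations
  set A₀' : ℝ := ∫ t in S', L t * ω₀ (M t x y) ∂μ with hA₀'def
  set A₁' : ℝ := ∫ t in S', L t * ω₁ (M t x y) ∂μ with hA₁'def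
  set A₀'' : ℝ := ∫ t in S'', L t * ω₀ (M t x y) ∂μ with hA₀''def
  set A₁'' : ℝ := ∫ t in S'', L t * ω₁ (M t x y) ∂μ with hA₁''def
  set F' : ℝ := ∫ t in S', L t * f (M t x y) ∂μ with hF'def
  set F'' : ℝ := ∫ t in S'', L t * f (M t x y) ∂μ with hF''def
  set D : ℝ := A₀' * A₁'' - A₀'' * A₁' with hDdef
  have hdisj : Disjoint S' S'' := by
    rw [Set.disjoint_left]
    rintro t ⟨h1, h2⟩ ⟨h3, h4⟩
    exact absurd h4 (not_le.mpr h2)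
  have hsplit : ∀ G : T → ℝ, Integrable (fun t => L t * G t) μ →
      ∫ t, L t * G t ∂μ = (∫ t in S', L t * G t ∂μ) + ∫ t in S'', L t * G t ∂μ := by
    intro G hG
    rw [← setIntegral_union hdisj hS''meas hG.integrableOn hG.integrableOn]
    symm
    apply setIntegral_eq_integral_of_forall_compl_eq_zero
    intro t ht
    have hL0 : L t = 0 := by
      by_contra h
      have hpos : 0 < L t := lt_of_le_of_ne (hLnn t) (Ne.symm h)
      rcases lt_or_ge (M t x y) c with h' | h'
      · exact ht (Or.inl ⟨hpos, h'⟩)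
      · exact ht (Or.inr ⟨hpos, h'⟩)
    simp [hL0]
  have h₀split : ω₀ c = A₀' + A₀'' := by
    rw [hrep₀']; exact hsplit _ hint₀'
  have h₁split : ω₁ c = A₁' + A₁'' := by
    rw [hrep₁']; exact hsplit _ hint₁'
  have hFsplit : ∫ t, L t * f (M t x y) ∂μ = F' + F'' := hsplit _ hintf'
  -- positivity of the masses of S' and S''
  have haeset0 : ({t | 0 < Λ t x y ∧ M t x y ≠ c} : Set T)
      =ᵐ[μ] {t | 0 < L t ∧ M t x y ≠ c} := by
    rw [Filter.eventuallyEq_set]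
    filter_upwards [hae] with t ht
    simp only [Set.mem_setOf_eq, ht]
  have hpos0 : 0 < μ {t | 0 < L t ∧ M t x y ≠ c} := by
    rw [← measure_congr haeset0]
    exact hposmeas x hx y hy hxy
  have hΩpos : ∀ u ∈ Set.Icc x y, ∀ v ∈ Set.Icc x y, u < v →
      0 < ω₀ u * ω₁ v - ω₀ v * ω₁ u := fun u hu v hv huv =>
    hcheb u (hIcc hu) v (hIcc hv) huv
  have hmuS'' : 0 < μ S'' := by
    by_contra hcon
    have hS''0 : μ S'' = 0 := by
      by_contra h0
      exact hcon (lt_of_le_of_ne (zero_le) (Ne.symm h0))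
    set G : T → ℝ := fun t => ω₁ c * (L t * ω₀ (M t x y)) - ω₀ c * (L t * ω₁ (M t x y))
      with hGdef
    have hGint : Integrable G μ := (hint₀'.const_mul _).sub (hint₁'.const_mul _)
    have hGzero : ∫ t, G t ∂μ = 0 := by
      rw [hGdef, integral_sub (hint₀'.const_mul _) (hint₁'.const_mul _),
        integral_const_mul, integral_const_mul, ← hrep₀', ← hrep₁']
      ring
    have hnm : ∀ᵐ t ∂μ, t ∉ S'' := measure_eq_zero_iff_ae_notMem.mp hS''0
    have hΩc : ∀ t, M t x y < c → 0 < ω₀ (M t x y) * ω₁ c - ω₀ c * ω₁ (M t x y) :=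
      fun t h => hΩpos (M t x y) (hmem t) c hcmem h
    have hGnn : 0 ≤ᵐ[μ] G := by
      filter_upwards [hnm] with t ht
      rcases (hLnn t).lt_or_eq with hL | hL
      · have hlt : M t x y < c := by
          by_contra hge
          exact ht ⟨hL, not_lt.mp hge⟩
        have hGt : G t = L t * (ω₀ (M t x y) * ω₁ c - ω₀ c * ω₁ (M t x y)) := by
          simp only [hGdef]; ring
        rw [Pi.zero_apply, hGt]
        exact mul_nonneg (hLnn t) (hΩc t hlt).le
      · have hGt : G t = 0 := by simp only [hGdef, ← hL]; ring
        rw [Pi.zero_apply, hGt]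
    have hG0 : G =ᵐ[μ] 0 := (integral_eq_zero_iff_of_nonneg_ae hGnn hGint).mp hGzero
    have hnull : ∀ᵐ t ∂μ, t ∉ {t | 0 < L t ∧ M t x y ≠ c} := by
      filter_upwards [hG0, hnm] with t h1 h2
      rintro ⟨htL, htne⟩
      have hlt : M t x y < c := by
        by_contra hge
        exact h2 ⟨htL, not_lt.mp hge⟩
      have hGt : G t = L t * (ω₀ (M t x y) * ω₁ c - ω₀ c * ω₁ (M t x y)) := by
        simp only [hGdef]; ring
      have hpos : 0 < G t := by rw [hGt]; exact mul_pos htL (hΩc t hlt)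
      have h1' : G t = 0 := by simpa using h1
      linarith
    exact hpos0.ne' (measure_eq_zero_iff_ae_notMem.mpr hnull)
  have hmuS' : 0 < μ S' := by
    by_contra hcon
    have hS'0 : μ S' = 0 := by
      by_contra h0
      exact hcon (lt_of_le_of_ne (zero_le) (Ne.symm h0))
    set G : T → ℝ := fun t => ω₀ c * (L t * ω₁ (M t x y)) - ω₁ c * (L t * ω₀ (M t x y))
      with hGdef
    have hGint : Integrable G μ := (hint₁'.const_mul _).sub (hint₀'.const_mul _)
    have hGzero : ∫ t, G t ∂μ = 0 := by
      rw [hGdef, integral_sub (hint₁'.const_mul _) (hint₀'.const_mul _),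
        integral_const_mul, integral_const_mul, ← hrep₀', ← hrep₁']
      ring
    have hnm : ∀ᵐ t ∂μ, t ∉ S' := measure_eq_zero_iff_ae_notMem.mp hS'0
    have hΩc : ∀ t, c < M t x y → 0 < ω₀ c * ω₁ (M t x y) - ω₀ (M t x y) * ω₁ c :=
      fun t h => hΩpos c hcmem (M t x y) (hmem t) h
    have hGnn : 0 ≤ᵐ[μ] G := by
      filter_upwards [hnm] with t ht
      rcases (hLnn t).lt_or_eq with hL | hL
      · have hle : c ≤ M t x y := by
          by_contra hge
          exact ht ⟨hL, not_le.mp hge⟩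
        rcases hle.lt_or_eq with hlt | heq
        · have hGt : G t = L t * (ω₀ c * ω₁ (M t x y) - ω₀ (M t x y) * ω₁ c) := by
            simp only [hGdef]; ring
          rw [Pi.zero_apply, hGt]
          exact mul_nonneg (hLnn t) (hΩc t hlt).le
        · have hGt : G t = 0 := by simp only [hGdef, ← heq]; ring
          rw [Pi.zero_apply, hGt]
      · have hGt : G t = 0 := by simp only [hGdef, ← hL]; ring
        rw [Pi.zero_apply, hGt]
    have hG0 : G =ᵐ[μ] 0 := (integral_eq_zero_iff_of_nonneg_ae hGnn hGint).mp hGzero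
    have hnull : ∀ᵐ t ∂μ, t ∉ {t | 0 < L t ∧ M t x y ≠ c} := by
      filter_upwards [hG0, hnm] with t h1 h2
      rintro ⟨htL, htne⟩
      have hlt : c < M t x y := by
        rcases lt_trichotomy (M t x y) c with h | h | h
        · exact absurd ⟨htL, h⟩ h2
        · exact absurd h htne
        · exact h
      have hGt : G t = L t * (ω₀ c * ω₁ (M t x y) - ω₀ (M t x y) * ω₁ c) := by
        simp only [hGdef]; ring
      have hpos : 0 < G t := by rw [hGt]; exact mul_pos htL (hΩc t hlt)
      have h1' : G t = 0 := by simpa using h1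
      linarith
    exact hpos0.ne' (measure_eq_zero_iff_ae_notMem.mpr hnull)
  -- Chebyshev positivity on [x,y]
  -- generic linear computations of set integrals
  have hintPQ : ∀ p q : ℝ,
      Integrable (fun t => L t * (p * ω₁ (M t x y) - q * ω₀ (M t x y))) μ :=
    fun p q => ((hint₁'.const_mul p).sub (hint₀'.const_mul q)).congr
      (Filter.Eventually.of_forall fun t => by simp only [Pi.sub_apply]; ring)
  have hintPQ2 : ∀ p q : ℝ,
      Integrable (fun t => L t * (p * ω₀ (M t x y) - q * ω₁ (M t x y))) μ :=
    fun p q => ((hint₀'.const_mul p).sub (hint₁'.const_mul q)).congr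
      (Filter.Eventually.of_forall fun t => by simp only [Pi.sub_apply]; ring)
  have hinner : ∀ (s : Set T) (p q : ℝ),
      ∫ t in s, L t * (p * ω₁ (M t x y) - q * ω₀ (M t x y)) ∂μ
        = p * (∫ t in s, L t * ω₁ (M t x y) ∂μ) - q * (∫ t in s, L t * ω₀ (M t x y) ∂μ) := by
    intro s p q
    rw [← integral_const_mul, ← integral_const_mul,
      ← integral_sub ((hint₁'.integrableOn).const_mul p) ((hint₀'.integrableOn).const_mul q)]
    apply integral_congr_ae
    filter_upwards with t
    ring
  have hinner2 : ∀ (s : Set T) (p q : ℝ),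
      ∫ t in s, L t * (p * ω₀ (M t x y) - q * ω₁ (M t x y)) ∂μ
        = p * (∫ t in s, L t * ω₀ (M t x y) ∂μ) - q * (∫ t in s, L t * ω₁ (M t x y) ∂μ) := by
    intro s p q
    rw [← integral_const_mul, ← integral_const_mul,
      ← integral_sub ((hint₀'.integrableOn).const_mul p) ((hint₁'.integrableOn).const_mul q)]
    apply integral_congr_ae
    filter_upwards with t
    ring
  -- bounds for ω₀, ω₁ on [x,y] and for eps
  obtain ⟨C₀, hC₀⟩ := (isCompact_Icc : IsCompact (Set.Icc x y)).exists_bound_of_continuousOn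
    (hc₀.mono hIcc)
  obtain ⟨C₁, hC₁⟩ := (isCompact_Icc : IsCompact (Set.Icc x y)).exists_bound_of_continuousOn
    (hc₁.mono hIcc)
  obtain ⟨⟨Ce, hCe⟩, hepsm⟩ := hepsreg x hx y hy c hc.1 hc.2
  have hC₀0 : 0 ≤ C₀ := le_trans (norm_nonneg _) (hC₀ x ⟨le_refl x, hxy.le⟩)
  have hC₁0 : 0 ≤ C₁ := le_trans (norm_nonneg _) (hC₁ x ⟨le_refl x, hxy.le⟩)
  have hCe0 : 0 ≤ Ce :=
    le_trans (abs_nonneg _) (hCe c ⟨hc.1.le, le_refl c⟩ c ⟨le_refl c, hc.2.le⟩)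
  set K : ℝ := (C₀ * C₁ + C₀ * C₁) * Ce with hKdef
  have hK0 : 0 ≤ K :=
    mul_nonneg (add_nonneg (mul_nonneg hC₀0 hC₁0) (mul_nonneg hC₀0 hC₁0)) hCe0
  -- the error kernel
  set ψ : T × T → ℝ := fun p => L p.2 * ((ω₀ (M p.1 x y) * ω₁ (M p.2 x y)
      - ω₀ (M p.2 x y) * ω₁ (M p.1 x y)) * eps (M p.1 x y) (M p.2 x y) c) with hψdef
  have hψmeas : Measurable ψ := by
    refine (hLmeas.comp measurable_snd).mul (Measurable.mul ?_ ?_)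
    · exact ((hmω₀.comp measurable_fst).mul (hmω₁.comp measurable_snd)).sub
        ((hmω₀.comp measurable_snd).mul (hmω₁.comp measurable_fst))
    · exact hepsm.comp ((hmeas_m.comp measurable_fst).prodMk (hmeas_m.comp measurable_snd))
  -- σ-finiteness of μ restricted to S''
  haveI hsf : SigmaFinite (μ.restrict S'') := by
    refine ⟨⟨⟨fun n => {t | 1 / (n + 1 : ℝ) ≤ L t} ∪ S''ᶜ, fun _ => trivial, fun n => ?_, ?_⟩⟩⟩
    · rw [Measure.restrict_apply' hS''meas]
      refine lt_of_le_of_lt (measure_mono ?_)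
        (hLint.measure_ge_lt_top (ε := 1 / (n + 1 : ℝ)) (by positivity))
      rintro t ⟨ht | ht, htS⟩
      · exact ht
      · exact absurd htS ht
    · ext t
      simp only [Set.mem_iUnion, Set.mem_union, Set.mem_setOf_eq, Set.mem_compl_iff,
        Set.mem_univ, iff_true]
      by_cases ht : t ∈ S''
      · obtain ⟨n, hn⟩ := exists_nat_one_div_lt ht.1
        exact ⟨n, Or.inl hn.le⟩
      · exact ⟨0, Or.inr ht⟩
  set Φ : T → ℝ := fun t' => ∫ t'' in S'', ψ (t', t'') ∂μ with hΦdef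
  have hΦsm : StronglyMeasurable Φ := hψmeas.stronglyMeasurable.integral_prod_right'
  have hψbound : ∀ t' ∈ S', ∀ t'' ∈ S'', |ψ (t', t'')| ≤ L t'' * K := by
    intro t' ht' t'' ht''
    have h₀' : |ω₀ (M t' x y)| ≤ C₀ := hC₀ _ (hmem t')
    have h₁' : |ω₁ (M t' x y)| ≤ C₁ := hC₁ _ (hmem t')
    have h₀'' : |ω₀ (M t'' x y)| ≤ C₀ := hC₀ _ (hmem t'')
    have h₁'' : |ω₁ (M t'' x y)| ≤ C₁ := hC₁ _ (hmem t'')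
    have heb : |eps (M t' x y) (M t'' x y) c| ≤ Ce :=
      hCe _ ⟨(hmem t').1, ht'.2.le⟩ _ ⟨ht''.2, (hmem t'').2⟩
    have hΩb : |ω₀ (M t' x y) * ω₁ (M t'' x y) - ω₀ (M t'' x y) * ω₁ (M t' x y)|
        ≤ C₀ * C₁ + C₀ * C₁ := by
      refine le_trans (abs_sub _ _) ?_
      rw [abs_mul, abs_mul]
      exact add_le_add (mul_le_mul h₀' h₁'' (abs_nonneg _) hC₀0)
        (mul_le_mul h₀'' h₁' (abs_nonneg _) hC₀0)
    have heq : |ψ (t', t'')| = L t'' * |(ω₀ (M t' x y) * ω₁ (M t'' x y)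
        - ω₀ (M t'' x y) * ω₁ (M t' x y)) * eps (M t' x y) (M t'' x y) c| := by
      simp only [hψdef]
      rw [abs_mul, abs_of_nonneg (hLnn t'')]
    rw [heq, hKdef]
    refine mul_le_mul_of_nonneg_left ?_ (hLnn t'')
    rw [abs_mul]
    exact mul_le_mul hΩb heb (abs_nonneg _)
      (add_nonneg (mul_nonneg hC₀0 hC₁0) (mul_nonneg hC₀0 hC₁0))
  have hLS''int : IntegrableOn L S'' μ := hLint.integrableOn
  have hψsec : ∀ t' ∈ S', IntegrableOn (fun t'' => ψ (t', t'')) S'' μ := by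
    intro t' ht'
    refine Integrable.mono (hLS''int.mul_const K)
      ((hψmeas.comp (measurable_const.prodMk measurable_id)).aestronglyMeasurable) ?_
    rw [ae_restrict_iff' hS''meas]
    filter_upwards with t'' ht''
    rw [Real.norm_eq_abs, Real.norm_eq_abs, abs_of_nonneg (mul_nonneg (hLnn t'') hK0)]
    exact hψbound t' ht' t'' ht''
  set K₂ : ℝ := (∫ t in S'', L t ∂μ) * K with hK₂def
  have hintS''L_nonneg : 0 ≤ ∫ t in S'', L t ∂μ :=
    setIntegral_nonneg hS''meas fun t _ => hLnn t
  have hK₂0 : 0 ≤ K₂ := mul_nonneg hintS''L_nonneg hK0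
  have hΦbound : ∀ t' ∈ S', |Φ t'| ≤ K₂ := by
    intro t' ht'
    have h1 : ‖∫ t'' in S'', ψ (t', t'') ∂μ‖ ≤ ∫ t'' in S'', ‖ψ (t', t'')‖ ∂μ :=
      norm_integral_le_integral_norm _
    have h2 : ∫ t'' in S'', ‖ψ (t', t'')‖ ∂μ ≤ ∫ t'' in S'', L t'' * K ∂μ := by
      refine setIntegral_mono_on ((hψsec t' ht').norm) (hLS''int.mul_const K) hS''meas ?_
      intro t'' ht''
      rw [Real.norm_eq_abs]
      exact hψbound t' ht' t'' ht''
    have h3 : ∫ t'' in S'', L t'' * K ∂μ = K₂ := by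
      rw [hK₂def, ← integral_mul_const]
    have h4 : |Φ t'| = ‖∫ t'' in S'', ψ (t', t'') ∂μ‖ := by
      simp only [hΦdef, Real.norm_eq_abs]
    rw [h4]
    exact le_trans h1 (le_trans h2 h3.le)
  have hLΦint : IntegrableOn (fun t' => L t' * Φ t') S' μ := by
    refine Integrable.mono ((hLint.integrableOn : IntegrableOn L S' μ).mul_const K₂)
      ((hLmeas.stronglyMeasurable.mul hΦsm).aestronglyMeasurable).restrict ?_
    rw [ae_restrict_iff' hS'meas]
    filter_upwards with t' ht'
    rw [Real.norm_eq_abs, Real.norm_eq_abs, abs_mul, abs_of_nonneg (hLnn t'),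
      abs_of_nonneg (mul_nonneg (hLnn t') hK₂0)]
    exact mul_le_mul_of_nonneg_left (hΦbound t' ht') (hLnn t')
  -- scaled convexity inequality
  have hscale : ∀ u v : ℝ, u ∈ Set.Icc x y → v ∈ Set.Icc x y → u < v → c ∈ Set.Icc u v →
      (ω₀ u * ω₁ v - ω₀ v * ω₁ u) * f c
        ≤ (ω₀ c * ω₁ v - ω₀ v * ω₁ c) * f u + (ω₀ u * ω₁ c - ω₀ c * ω₁ u) * f v
          + (ω₀ u * ω₁ v - ω₀ v * ω₁ u) * eps u v c := by
    intro u v hu hv huv hcuv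
    have hΩuv := hΩpos u hu v hv huv
    have hne : ω₀ u * ω₁ v - ω₀ v * ω₁ u ≠ 0 := hΩuv.ne'
    have hcv := hconv u (hIcc hu) v (hIcc hv) huv c hcuv
    have h3 := mul_le_mul_of_nonneg_left hcv hΩuv.le
    refine le_trans h3 (le_of_eq ?_)
    field_simp
  -- the two-variable pointwise inequality
  set lhsIn : T → T → ℝ := fun t' t'' =>
    (L t' * ω₀ (M t' x y) * f c) * (L t'' * ω₁ (M t'' x y))
      - (L t' * ω₁ (M t' x y) * f c) * (L t'' * ω₀ (M t'' x y)) with hlhsIn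
  set rhsIn : T → T → ℝ := fun t' t'' =>
    ((L t' * f (M t' x y) * ω₀ c) * (L t'' * ω₁ (M t'' x y))
      - (L t' * f (M t' x y) * ω₁ c) * (L t'' * ω₀ (M t'' x y))
      + (L t' * (ω₀ (M t' x y) * ω₁ c - ω₀ c * ω₁ (M t' x y))) * (L t'' * f (M t'' x y)))
      + L t' * ψ (t', t'') with hrhsIn
  have hpw : ∀ t' ∈ S', ∀ t'' ∈ S'', lhsIn t' t'' ≤ rhsIn t' t'' := by
    intro t' ht' t'' ht''
    have hu : M t' x y ∈ Set.Icc x y := hmem t'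
    have hv : M t'' x y ∈ Set.Icc x y := hmem t''
    have huv : M t' x y < M t'' x y := lt_of_lt_of_le ht'.2 ht''.2
    have key := hscale (M t' x y) (M t'' x y) hu hv huv ⟨ht'.2.le, ht''.2⟩
    have h4 := mul_le_mul_of_nonneg_left key (mul_nonneg (hLnn t') (hLnn t''))
    simp only [hlhsIn, hrhsIn, hψdef]
    ring_nf at h4 ⊢
    linarith [h4]
  -- inner integrability and integral values
  have hInL : ∀ t', IntegrableOn (fun t'' => lhsIn t' t'') S'' μ := by
    intro t'
    simp only [hlhsIn]
    exact (hint₁'.integrableOn.const_mul _).sub (hint₀'.integrableOn.const_mul _)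
  have hInR : ∀ t' ∈ S', IntegrableOn (fun t'' => rhsIn t' t'') S'' μ := by
    intro t' ht'
    simp only [hrhsIn]
    exact (((hint₁'.integrableOn.const_mul _).sub (hint₀'.integrableOn.const_mul _)).add
      (hintf'.integrableOn.const_mul _)).add ((hψsec t' ht').const_mul _)
  have hsub'' : ∀ r₁ r₂ : ℝ, IntegrableOn
      (fun t'' => r₁ * (L t'' * ω₁ (M t'' x y)) - r₂ * (L t'' * ω₀ (M t'' x y))) S'' μ :=
    fun r₁ r₂ => (hint₁'.integrableOn.const_mul _).sub (hint₀'.integrableOn.const_mul _)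
  have hsum'' : ∀ r₁ r₂ r₃ : ℝ, IntegrableOn
      (fun t'' => r₁ * (L t'' * ω₁ (M t'' x y)) - r₂ * (L t'' * ω₀ (M t'' x y))
        + r₃ * (L t'' * f (M t'' x y))) S'' μ :=
    fun r₁ r₂ r₃ => (hsub'' r₁ r₂).add (hintf'.integrableOn.const_mul _)
  have hsubO : ∀ r₁ r₂ : ℝ, IntegrableOn
      (fun t' => r₁ * (L t' * ω₀ (M t' x y)) - r₂ * (L t' * ω₁ (M t' x y))) S' μ :=
    fun r₁ r₂ => (hint₀'.integrableOn.const_mul _).sub (hint₁'.integrableOn.const_mul _)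
  have hsumO : ∀ r₀ r₁ r₂ : ℝ, IntegrableOn
      (fun t' => r₀ * (L t' * f (M t' x y))
        + (r₁ * (L t' * ω₀ (M t' x y)) - r₂ * (L t' * ω₁ (M t' x y)))) S' μ :=
    fun r₀ r₁ r₂ => (hintf'.integrableOn.const_mul _).add (hsubO r₁ r₂)
  have hIL : ∀ t', ∫ t'' in S'', lhsIn t' t'' ∂μ
      = (L t' * ω₀ (M t' x y) * f c) * A₁'' - (L t' * ω₁ (M t' x y) * f c) * A₀'' := by
    intro t'
    simp only [hlhsIn]
    rw [integral_sub (hint₁'.integrableOn.const_mul _) (hint₀'.integrableOn.const_mul _),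
      integral_const_mul, integral_const_mul, hA₀''def, hA₁''def]
  have hIR : ∀ t' ∈ S', ∫ t'' in S'', rhsIn t' t'' ∂μ
      = ((L t' * f (M t' x y) * ω₀ c) * A₁'' - (L t' * f (M t' x y) * ω₁ c) * A₀''
        + (L t' * (ω₀ (M t' x y) * ω₁ c - ω₀ c * ω₁ (M t' x y))) * F'')
        + L t' * Φ t' := by
    intro t' ht'
    simp only [hrhsIn]
    rw [integral_add (hsum'' _ _ _) ((hψsec t' ht').const_mul _),
      integral_add (hsub'' _ _) (hintf'.integrableOn.const_mul _),
      integral_sub (hint₁'.integrableOn.const_mul _) (hint₀'.integrableOn.const_mul _),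
      integral_const_mul, integral_const_mul, integral_const_mul, integral_const_mul,
      hA₀''def, hA₁''def, hF''def, hΦdef]
  -- outer functions
  set lhsOut : T → ℝ := fun t' => (f c * A₁'') * (L t' * ω₀ (M t' x y))
      - (f c * A₀'') * (L t' * ω₁ (M t' x y)) with hlhsOut
  set rhsOut : T → ℝ := fun t' => ((ω₀ c * A₁'' - ω₁ c * A₀'') * (L t' * f (M t' x y))
      + ((ω₁ c * F'') * (L t' * ω₀ (M t' x y)) - (ω₀ c * F'') * (L t' * ω₁ (M t' x y))))
      + L t' * Φ t' with hrhsOut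
  have hOutL : IntegrableOn lhsOut S' μ := by
    simp only [hlhsOut]
    exact (hint₀'.integrableOn.const_mul _).sub (hint₁'.integrableOn.const_mul _)
  have hOutR : IntegrableOn rhsOut S' μ := by
    simp only [hrhsOut]
    exact ((hintf'.integrableOn.const_mul _).add
      ((hint₀'.integrableOn.const_mul _).sub (hint₁'.integrableOn.const_mul _))).add hLΦint
  have hmono : ∫ t' in S', lhsOut t' ∂μ ≤ ∫ t' in S', rhsOut t' ∂μ := by
    refine setIntegral_mono_on hOutL hOutR hS'meas ?_
    intro t' ht'
    have e1 : lhsOut t' = ∫ t'' in S'', lhsIn t' t'' ∂μ := by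
      rw [hIL t']; simp only [hlhsOut]; ring
    have e2 : rhsOut t' = ∫ t'' in S'', rhsIn t' t'' ∂μ := by
      rw [hIR t' ht']; simp only [hrhsOut]; ring
    rw [e1, e2]
    exact setIntegral_mono_on (hInL t') (hInR t' ht') hS''meas
      (fun t'' ht'' => hpw t' ht' t'' ht'')
  set N : ℝ := ∫ t' in S', L t' * Φ t' ∂μ with hNdef
  have hOL : ∫ t' in S', lhsOut t' ∂μ = (f c * A₁'') * A₀' - (f c * A₀'') * A₁' := by
    simp only [hlhsOut]
    rw [integral_sub (hint₀'.integrableOn.const_mul _) (hint₁'.integrableOn.const_mul _),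
      integral_const_mul, integral_const_mul, hA₀'def, hA₁'def]
  have hOR : ∫ t' in S', rhsOut t' ∂μ = ((ω₀ c * A₁'' - ω₁ c * A₀'') * F'
      + ((ω₁ c * F'') * A₀' - (ω₀ c * F'') * A₁')) + N := by
    simp only [hrhsOut]
    rw [integral_add (hsumO _ _ _) hLΦint,
      integral_add (hintf'.integrableOn.const_mul _) (hsubO _ _),
      integral_sub (hint₀'.integrableOn.const_mul _) (hint₁'.integrableOn.const_mul _),
      integral_const_mul, integral_const_mul, integral_const_mul,
      hA₀'def, hA₁'def, hF'def, hNdef]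
  have hkey : f c * D ≤ (F' + F'') * D + N := by
    have h := hmono
    rw [hOL, hOR, h₀split, h₁split] at h
    simp only [hDdef]
    ring_nf at h ⊢
    linarith [h]
  -- positivity of D
  have hA'' : ∀ t' ∈ S', 0 < ω₀ (M t' x y) * A₁'' - ω₁ (M t' x y) * A₀'' := by
    intro t' ht'
    have hval : ∀ t'' ∈ S'',
        0 < L t'' * (ω₀ (M t' x y) * ω₁ (M t'' x y) - ω₁ (M t' x y) * ω₀ (M t'' x y)) := by
      intro t'' ht''
      have hΩ := hΩpos _ (hmem t') _ (hmem t'') (lt_of_lt_of_le ht'.2 ht''.2)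
      have hcm : ω₀ (M t'' x y) * ω₁ (M t' x y) = ω₁ (M t' x y) * ω₀ (M t'' x y) :=
        mul_comm _ _
      exact mul_pos ht''.1 (by linarith)
    have hpos : 0 < ∫ t'' in S'', L t'' * (ω₀ (M t' x y) * ω₁ (M t'' x y)
        - ω₁ (M t' x y) * ω₀ (M t'' x y)) ∂μ := by
      rw [setIntegral_pos_iff_support_of_nonneg_ae ?_ ((hintPQ _ _).integrableOn)]
      · refine lt_of_lt_of_le hmuS'' (measure_mono ?_)
        intro t'' ht''
        exact ⟨(hval t'' ht'').ne', ht''⟩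
      · exact (ae_restrict_iff' hS''meas).mpr
          (Filter.Eventually.of_forall fun t'' ht'' => (hval t'' ht'').le)
    rw [hinner S'' (ω₀ (M t' x y)) (ω₁ (M t' x y)), ← hA₀''def, ← hA₁''def] at hpos
    exact hpos
  have hD : 0 < D := by
    have hval : ∀ t' ∈ S',
        0 < L t' * (A₁'' * ω₀ (M t' x y) - A₀'' * ω₁ (M t' x y)) := by
      intro t' ht'
      have h := hA'' t' ht'
      have e1 : ω₀ (M t' x y) * A₁'' = A₁'' * ω₀ (M t' x y) := mul_comm _ _
      have e2 : ω₁ (M t' x y) * A₀'' = A₀'' * ω₁ (M t' x y) := mul_comm _ _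
      exact mul_pos ht'.1 (by linarith)
    have hpos : 0 < ∫ t' in S', L t' * (A₁'' * ω₀ (M t' x y) - A₀'' * ω₁ (M t' x y)) ∂μ := by
      rw [setIntegral_pos_iff_support_of_nonneg_ae ?_ ((hintPQ2 _ _).integrableOn)]
      · refine lt_of_lt_of_le hmuS' (measure_mono ?_)
        intro t' ht'
        exact ⟨(hval t' ht').ne', ht'⟩
      · exact (ae_restrict_iff' hS'meas).mpr
          (Filter.Eventually.of_forall fun t' ht' => (hval t' ht').le)
    rw [hinner2 S' A₁'' A₀'', ← hA₀'def, ← hA₁'def] at hpos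
    simp only [hDdef]
    linarith
  -- identification of the goal integrals
  have hIf : ∫ t, Λ t x y * f (M t x y) ∂μ = F' + F'' := by
    rw [integral_congr_ae (hcongr fun t => f (M t x y))]
    exact hFsplit
  have hDinner : ∀ t', (∫ t'' in {t | 0 < Λ t x y ∧ c ≤ M t x y}, Λ t' x y * Λ t'' x y *
      (ω₀ (M t' x y) * ω₁ (M t'' x y) - ω₀ (M t'' x y) * ω₁ (M t' x y)) ∂μ)
      = Λ t' x y * (ω₀ (M t' x y) * A₁'' - ω₁ (M t' x y) * A₀'') := by
    intro t'
    rw [hres'']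
    have e1 : (∫ t'' in S'', Λ t' x y * Λ t'' x y *
        (ω₀ (M t' x y) * ω₁ (M t'' x y) - ω₀ (M t'' x y) * ω₁ (M t' x y)) ∂μ)
        = ∫ t'' in S'', Λ t' x y * (L t'' * (ω₀ (M t' x y) * ω₁ (M t'' x y)
          - ω₁ (M t' x y) * ω₀ (M t'' x y))) ∂μ := by
      apply integral_congr_ae
      filter_upwards [ae_restrict_of_ae hae] with t'' ht''
      have h : Λ t'' x y = L t'' := ht''
      rw [h]; ring
    rw [e1, integral_const_mul, hinner S'' (ω₀ (M t' x y)) (ω₁ (M t' x y)),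
      ← hA₀''def, ← hA₁''def]
  have hDgoal : (∫ t' in {t | 0 < Λ t x y ∧ M t x y < c},
      ∫ t'' in {t | 0 < Λ t x y ∧ c ≤ M t x y}, Λ t' x y * Λ t'' x y *
        (ω₀ (M t' x y) * ω₁ (M t'' x y) - ω₀ (M t'' x y) * ω₁ (M t' x y)) ∂μ ∂μ) = D := by
    rw [hres']
    calc (∫ t' in S', ∫ t'' in {t | 0 < Λ t x y ∧ c ≤ M t x y}, Λ t' x y * Λ t'' x y *
          (ω₀ (M t' x y) * ω₁ (M t'' x y) - ω₀ (M t'' x y) * ω₁ (M t' x y)) ∂μ ∂μ)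
        = ∫ t' in S', Λ t' x y * (ω₀ (M t' x y) * A₁'' - ω₁ (M t' x y) * A₀'') ∂μ :=
          integral_congr_ae (Filter.Eventually.of_forall fun t' => hDinner t')
      _ = ∫ t' in S', L t' * (A₁'' * ω₀ (M t' x y) - A₀'' * ω₁ (M t' x y)) ∂μ := by
          apply integral_congr_ae
          filter_upwards [ae_restrict_of_ae hae] with t' ht'
          have h : Λ t' x y = L t' := ht'
          rw [h]; ring
      _ = A₁'' * A₀' - A₀'' * A₁' := by
          rw [hinner2 S' A₁'' A₀'', ← hA₀'def, ← hA₁'def]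
      _ = D := by simp only [hDdef]; ring
  have hNinner : ∀ t', (∫ t'' in {t | 0 < Λ t x y ∧ c ≤ M t x y}, Λ t' x y * Λ t'' x y *
      (ω₀ (M t' x y) * ω₁ (M t'' x y) - ω₀ (M t'' x y) * ω₁ (M t' x y)) *
      eps (M t' x y) (M t'' x y) c ∂μ) = Λ t' x y * Φ t' := by
    intro t'
    rw [hres'']
    simp only [hΦdef]
    rw [← integral_const_mul]
    apply integral_congr_ae
    filter_upwards [ae_restrict_of_ae hae] with t'' ht''
    have h : Λ t'' x y = L t'' := ht''
    simp only [hψdef]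
    rw [h]; ring
  have hNgoal : (∫ t' in {t | 0 < Λ t x y ∧ M t x y < c},
      ∫ t'' in {t | 0 < Λ t x y ∧ c ≤ M t x y}, Λ t' x y * Λ t'' x y *
        (ω₀ (M t' x y) * ω₁ (M t'' x y) - ω₀ (M t'' x y) * ω₁ (M t' x y)) *
        eps (M t' x y) (M t'' x y) c ∂μ ∂μ) = N := by
    rw [hres']
    calc (∫ t' in S', ∫ t'' in {t | 0 < Λ t x y ∧ c ≤ M t x y}, Λ t' x y * Λ t'' x y *
          (ω₀ (M t' x y) * ω₁ (M t'' x y) - ω₀ (M t'' x y) * ω₁ (M t' x y)) *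
          eps (M t' x y) (M t'' x y) c ∂μ ∂μ)
        = ∫ t' in S', Λ t' x y * Φ t' ∂μ :=
          integral_congr_ae (Filter.Eventually.of_forall fun t' => hNinner t')
      _ = N := by
          rw [hNdef]
          apply integral_congr_ae
          filter_upwards [ae_restrict_of_ae hae] with t' ht'
          have h : Λ t' x y = L t' := ht'
          rw [h]
  -- conclusion
  rw [hIf, hNgoal, hDgoal]
  have h2 : f c ≤ ((F' + F'') * D + N) / D := by
    rw [le_div_iff₀ hD]
    linarith [hkey]
  have h3 : ((F' + F'') * D + N) / D = (F' + F'') + N / D := by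
    field_simp
  rw [h3] at h2
  exact h2
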